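/- Coercivity of the equal-area quadratic form: let m = 2π/3 + √3/4, g(θ) = cos θ / (2(sin θ − θ cos θ)), α₁ = α₂ = (1/4)g(√3/2) + g(2π/3) + 1/(2m), and α₃ = −(1/4)g(√3/2) + 1/(2m). Then α₁ > 0 and α₁α₂ − α₃² > 0; consequently there exists α* > 0 such that α₁ x² + α₂ y² + 2α₃ x y ≥ α*(x² + y²) for all real x, y. -/

import Mathlib

open Real Set

set_option maxHeartbeats 1000000 in
/-- Coercivity of the equal-area quadratic form. -/
theorem stmt19 :
    let m : ℝ := 2*π/3 + Real.sqrt 3/4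
    let g : ℝ → ℝ := fun θ => Real.cos θ / (2*(Real.sin θ - θ*Real.cos θ))
    let α₁ : ℝ := (1/4)*g (Real.sqrt 3/2) + g (2*π/3) + 1/(2*m)
    let α₂ : ℝ := α₁
    let α₃ : ℝ := -(1/4)*g (Real.sqrt 3/2) + 1/(2*m)
    0 < α₁ ∧ 0 < α₁*α₂ - α₃^2 ∧
      ∃ αs > (0:ℝ), ∀ x y : ℝ, α₁*x^2 + α₂*y^2 + 2*α₃*x*y ≥ αs*(x^2 + y^2) := by
  have hπ : (0:ℝ) < π := Real.pi_pos
  have h3 : Real.sqrt 3 ^ 2 = 3 := Real.sq_sqrt (by norm_num)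
  have h3p : (0:ℝ) < Real.sqrt 3 := Real.sqrt_pos.mpr (by norm_num)
  have h3lt : Real.sqrt 3 < 2 := by nlinarith
  set c := Real.cos (Real.sqrt 3 / 2) with hcdef
  set s := Real.sin (Real.sqrt 3 / 2) with hsdef
  have hc1 : 5/8 ≤ c := by
    have h := Real.one_sub_sq_div_two_le_cos (x := Real.sqrt 3 / 2)
    rw [← hcdef] at h
    nlinarith
  have hs1 : s < Real.sqrt 3 / 2 := by
    rw [hsdef]; exact Real.sin_lt (by positivity)
  have hs2 : 13 * Real.sqrt 3 / 32 < s := by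
    have h := Real.sin_gt_sub_cube (show (0:ℝ) < Real.sqrt 3 / 2 by positivity)
    rw [← hsdef] at h
    nlinarith
  have ht : 61 * Real.sqrt 3 / 256 < Real.sin (Real.sqrt 3 / 4) := by
    have h := Real.sin_gt_sub_cube (show (0:ℝ) < Real.sqrt 3 / 4 by positivity)
    nlinarith
  have hc2 : c < 21605/32768 := by
    have h := Real.sin_sq_eq_half_sub (Real.sqrt 3 / 4)
    rw [show 2 * (Real.sqrt 3 / 4) = Real.sqrt 3 / 2 by ring, ← hcdef] at h
    nlinarith [ht]
  have hDpos : 0 < s - Real.sqrt 3 / 2 * c := by nlinarith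
  have hDu : s - Real.sqrt 3 / 2 * c < 3 * Real.sqrt 3 / 16 := by nlinarith
  have hcos23 : Real.cos (2*π/3) = -(1/2) := by
    rw [show 2*π/3 = π - π/3 by ring, Real.cos_pi_sub, Real.cos_pi_div_three]
  have hsin23 : Real.sin (2*π/3) = Real.sqrt 3 / 2 := by
    rw [show 2*π/3 = π - π/3 by ring, Real.sin_pi_sub, Real.sin_pi_div_three]
  intro m g α₁ α₂ α₃
  have hg1 : g (Real.sqrt 3 / 2) = c / (2*(s - Real.sqrt 3/2 * c)) := by
    simp only [g, hcdef, hsdef]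
  have hd1 : (0:ℝ) < 2*Real.sqrt 3 + 4*π/3 := by positivity
  have hd2 : (0:ℝ) < 2*π/3 + Real.sqrt 3/4 := by positivity
  have hg2 : g (2*π/3) = -(1 / (2*Real.sqrt 3 + 4*π/3)) := by
    simp only [g, hcos23, hsin23]
    have hne : (2:ℝ)*(Real.sqrt 3/2 - 2*π/3 * -(1/2)) ≠ 0 :=
      ne_of_gt (by nlinarith : (0:ℝ) < 2*(Real.sqrt 3/2 - 2*π/3 * -(1/2)))
    have hne3 : Real.sqrt 3 * 3 + π * 2 ≠ 0 := by positivity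
    field_simp
    ring_nf; field_simp; ring
  have hkey1 : 0 < α₁ - α₃ := by
    have e1 : α₁ - α₃ = c / (4*(s - Real.sqrt 3/2 * c)) - 1 / (2*Real.sqrt 3 + 4*π/3) := by
      simp only [α₁, α₃, hg1, hg2]
      have hne : s - Real.sqrt 3/2 * c ≠ 0 := ne_of_gt hDpos
      field_simp
      ring
    rw [e1, sub_pos, div_lt_div_iff₀ hd1 (by nlinarith)]
    nlinarith
  have hkey2 : 0 < α₁ + α₃ := by
    have e2 : α₁ + α₃ = 1 / (2*π/3 + Real.sqrt 3/4) - 1 / (2*Real.sqrt 3 + 4*π/3) := by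
      simp only [α₁, α₃, hg2, m]
      have hne1 : (2:ℝ)*π/3 + Real.sqrt 3/4 ≠ 0 := ne_of_gt hd2
      have hne2 : (2:ℝ)*Real.sqrt 3 + 4*π/3 ≠ 0 := ne_of_gt hd1
      field_simp
      ring
    rw [e2, sub_pos, div_lt_div_iff₀ hd1 hd2]
    nlinarith
  have hα2 : α₂ = α₁ := rfl
  clear_value m g α₁ α₂ α₃
  refine ⟨by linarith, ?_, ?_⟩
  · have e3 : α₁*α₂ - α₃^2 = (α₁ - α₃) * (α₁ + α₃) := by rw [hα2]; ring
    rw [e3]; exact mul_pos hkey1 hkey2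
  · refine ⟨min (α₁+α₃) (α₁-α₃), lt_min hkey2 hkey1, fun x y => ?_⟩
    rw [hα2]
    nlinarith [mul_nonneg (sub_nonneg.2 (min_le_left (α₁+α₃) (α₁-α₃))) (sq_nonneg (x+y)),
      mul_nonneg (sub_nonneg.2 (min_le_right (α₁+α₃) (α₁-α₃))) (sq_nonneg (x-y))]
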